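/- Let G be a group, V a real Banach space, and φ : G → V a quasi-homomorphism. Then for every g ∈ G the sequence (φ(gⁿ)/n)ₙ converges in V, and the map φ̂ : G → V defined by φ̂(g) := lim_{n→∞} φ(gⁿ)/n is a homogeneous quasi-homomorphism; in particular φ̂ has finite defect (at most 4·D_φ) and satisfies φ̂(gᵏ) = k·φ̂(g) for every g ∈ G and every integer k. -/

import Mathlib

open Filter

/-- Homogenization of a quasi-homomorphism into a real Banach space: the
limits `φ(gⁿ)/n` exist and define a homogeneous quasi-homomorphism whose
defect is at most `4·D_φ`. -/
theorem homogenization_exists {G V : Type*} [Group G]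
    [NormedAddCommGroup V] [NormedSpace ℝ V] [CompleteSpace V]
    (φ : G → V) (D : ℝ)
    (hD : ∀ g h : G, ‖φ (g * h) - φ g - φ h‖ ≤ D) :
    ∃ φh : G → V,
      (∀ g : G, Filter.Tendsto (fun n : ℕ => (n : ℝ)⁻¹ • φ (g ^ n))
        Filter.atTop (nhds (φh g))) ∧
      (∀ g h : G, ‖φh (g * h) - φh g - φh h‖ ≤ 4 * D) ∧
      (∀ g : G, ∀ k : ℤ, φh (g ^ k) = (k : ℝ) • φh g) := by
  have hD0 : 0 ≤ D := le_trans (norm_nonneg _) (hD 1 1)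
  -- key iterate estimate
  have key : ∀ g : G, ∀ m n : ℕ, 1 ≤ m →
      ‖φ (g ^ (m * n)) - (m : ℝ) • φ (g ^ n)‖ ≤ m * D := by
    intro g m n hm
    induction m with
    | zero => omega
    | succ m ih =>
      rcases Nat.eq_zero_or_pos m with h0 | hpos
      · subst h0; simp [hD0]
      · have ihm := ih hpos
        have h1 : ‖φ (g ^ (m * n) * g ^ n) - φ (g ^ (m * n)) - φ (g ^ n)‖ ≤ D := hD _ _
        have hpow : g ^ ((m + 1) * n) = g ^ (m * n) * g ^ n := by
          rw [← pow_add]; ring_nf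
        have hex : φ (g ^ ((m + 1) * n)) - ((m + 1 : ℕ) : ℝ) • φ (g ^ n)
            = (φ (g ^ (m * n) * g ^ n) - φ (g ^ (m * n)) - φ (g ^ n))
              + (φ (g ^ (m * n)) - (m : ℝ) • φ (g ^ n)) := by
          rw [hpow]; push_cast; rw [add_smul, one_smul]; abel
        calc ‖φ (g ^ ((m + 1) * n)) - ((m + 1 : ℕ) : ℝ) • φ (g ^ n)‖
            ≤ ‖φ (g ^ (m * n) * g ^ n) - φ (g ^ (m * n)) - φ (g ^ n)‖
              + ‖φ (g ^ (m * n)) - (m : ℝ) • φ (g ^ n)‖ := by rw [hex]; exact norm_add_le _ _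
          _ ≤ D + m * D := add_le_add h1 ihm
          _ = (m + 1 : ℕ) * D := by push_cast; ring
  -- Cauchy estimate
  have hbd : ∀ g : G, ∀ m n : ℕ, 1 ≤ m → 1 ≤ n →
      ‖(m : ℝ)⁻¹ • φ (g ^ m) - (n : ℝ)⁻¹ • φ (g ^ n)‖ ≤ D / m + D / n := by
    intro g m n hm hn
    have hm0 : (0 : ℝ) < m := by exact_mod_cast hm
    have hn0 : (0 : ℝ) < n := by exact_mod_cast hn
    have e1 : ‖((m * n : ℕ) : ℝ)⁻¹ • φ (g ^ (m * n)) - (n : ℝ)⁻¹ • φ (g ^ n)‖ ≤ D / n := by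
      have : ((m * n : ℕ) : ℝ)⁻¹ • φ (g ^ (m * n)) - (n : ℝ)⁻¹ • φ (g ^ n)
          = ((m * n : ℕ) : ℝ)⁻¹ • (φ (g ^ (m * n)) - (m : ℝ) • φ (g ^ n)) := by
        rw [smul_sub, smul_smul]
        push_cast
        rw [mul_inv]
        congr 2
        field_simp
      rw [this, norm_smul]
      have hkey := key g m n hm
      calc ‖(((m * n : ℕ) : ℝ))⁻¹‖ * ‖φ (g ^ (m * n)) - (m : ℝ) • φ (g ^ n)‖
          ≤ ((m : ℝ) * n)⁻¹ * (m * D) := by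
            push_cast
            rw [Real.norm_eq_abs, abs_of_nonneg (by positivity)]
            apply mul_le_mul_of_nonneg_left hkey (by positivity)
        _ = D / n := by field_simp
    have e2 : ‖((m * n : ℕ) : ℝ)⁻¹ • φ (g ^ (m * n)) - (m : ℝ)⁻¹ • φ (g ^ m)‖ ≤ D / m := by
      have hmn : m * n = n * m := Nat.mul_comm m n
      have : ((m * n : ℕ) : ℝ)⁻¹ • φ (g ^ (m * n)) - (m : ℝ)⁻¹ • φ (g ^ m)
          = ((n * m : ℕ) : ℝ)⁻¹ • (φ (g ^ (n * m)) - (n : ℝ) • φ (g ^ m)) := by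
        rw [hmn, smul_sub, smul_smul]
        push_cast
        rw [mul_inv]
        congr 2
        field_simp
      rw [this, norm_smul]
      have hkey := key g n m hn
      calc ‖(((n * m : ℕ) : ℝ))⁻¹‖ * ‖φ (g ^ (n * m)) - (n : ℝ) • φ (g ^ m)‖
          ≤ ((n : ℝ) * m)⁻¹ * (n * D) := by
            push_cast
            rw [Real.norm_eq_abs, abs_of_nonneg (by positivity)]
            apply mul_le_mul_of_nonneg_left hkey (by positivity)
        _ = D / m := by field_simp
    calc ‖(m : ℝ)⁻¹ • φ (g ^ m) - (n : ℝ)⁻¹ • φ (g ^ n)‖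
        ≤ ‖(m : ℝ)⁻¹ • φ (g ^ m) - ((m * n : ℕ) : ℝ)⁻¹ • φ (g ^ (m * n))‖
          + ‖((m * n : ℕ) : ℝ)⁻¹ • φ (g ^ (m * n)) - (n : ℝ)⁻¹ • φ (g ^ n)‖ :=
          norm_sub_le_norm_sub_add_norm_sub _ _ _
      _ ≤ D / m + D / n := by
          refine add_le_add ?_ e1
          rw [norm_sub_rev]; exact e2
  -- convergence
  have hconv : ∀ g : G, ∃ L : V,
      Tendsto (fun n : ℕ => (n : ℝ)⁻¹ • φ (g ^ n)) atTop (nhds L) := by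
    intro g
    have hc : CauchySeq (fun n : ℕ => (n : ℝ)⁻¹ • φ (g ^ n)) := by
      rw [Metric.cauchySeq_iff]
      intro ε hε
      obtain ⟨K, hK⟩ := exists_nat_gt (2 * D / ε)
      refine ⟨max K 1, fun m hm n hn => ?_⟩
      have hN1 : 1 ≤ max K 1 := le_max_right _ _
      have hm1 : 1 ≤ m := le_trans hN1 hm
      have hn1 : 1 ≤ n := le_trans hN1 hn
      have hN0 : (0 : ℝ) < (max K 1 : ℕ) := by exact_mod_cast lt_of_lt_of_le Nat.one_pos hN1
      have hNK : (2 * D / ε) < (max K 1 : ℕ) := lt_of_lt_of_le hK (by exact_mod_cast le_max_left K 1)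
      rw [dist_eq_norm]
      calc ‖(m : ℝ)⁻¹ • φ (g ^ m) - (n : ℝ)⁻¹ • φ (g ^ n)‖
          ≤ D / m + D / n := hbd g m n hm1 hn1
        _ ≤ D / (max K 1 : ℕ) + D / (max K 1 : ℕ) := by
            gcongr
        _ = 2 * D / (max K 1 : ℕ) := by ring
        _ < ε := by
            rw [div_lt_iff₀ hN0]
            have := (div_lt_iff₀ hε).mp hNK
            linarith
    exact cauchySeq_tendsto_of_complete hc
  choose φh hφh using hconv
  -- φh 1 = 0
  have hone : φh 1 = 0 := by
    have h2 : Tendsto (fun n : ℕ => (n : ℝ)⁻¹ • φ ((1 : G) ^ n)) atTop (nhds 0) := by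
      simp only [one_pow]
      have := (tendsto_inv_atTop_nhds_zero_nat (𝕜 := ℝ)).smul_const (φ (1 : G))
      simpa using this
    exact tendsto_nhds_unique (hφh 1) h2
  -- homogeneity for positive naturals
  have hnat : ∀ g : G, ∀ k : ℕ, 1 ≤ k → φh (g ^ k) = (k : ℝ) • φh g := by
    intro g k hk
    have hk0 : (0 : ℝ) < k := by exact_mod_cast hk
    have hmul : Tendsto (fun n : ℕ => k * n) atTop atTop :=
      tendsto_atTop_mono (fun n => Nat.le_mul_of_pos_left n hk) tendsto_id
    have h1 : Tendsto (fun n : ℕ => ((k * n : ℕ) : ℝ)⁻¹ • φ (g ^ (k * n))) atTop (nhds (φh g)) :=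
      (hφh g).comp hmul
    have h2 : Tendsto (fun n : ℕ => (k : ℝ) • (((k * n : ℕ) : ℝ)⁻¹ • φ (g ^ (k * n))))
        atTop (nhds ((k : ℝ) • φh g)) := h1.const_smul _
    have heq : (fun n : ℕ => (k : ℝ) • (((k * n : ℕ) : ℝ)⁻¹ • φ (g ^ (k * n))))
        = fun n : ℕ => (n : ℝ)⁻¹ • φ ((g ^ k) ^ n) := by
      funext n
      rw [← pow_mul, smul_smul]
      congr 1
      rcases Nat.eq_zero_or_pos n with h0 | hn
      · subst h0; simp
      · have hn0 : (0 : ℝ) < n := by exact_mod_cast hn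
        push_cast
        field_simp
    rw [heq] at h2
    exact tendsto_nhds_unique (hφh (g ^ k)) h2
  -- inverse
  have hinv : ∀ g : G, φh g⁻¹ = -φh g := by
    intro g
    have hz : Tendsto (fun n : ℕ => (n : ℝ)⁻¹ • (φ 1 - φ (g ^ n) - φ (g⁻¹ ^ n)))
        atTop (nhds 0) := by
      refine squeeze_zero_norm (a := fun n : ℕ => (n : ℝ)⁻¹ * D) (fun n => ?_) ?_
      · 
        rw [norm_smul, Real.norm_eq_abs, abs_of_nonneg (by positivity)]
        apply mul_le_mul_of_nonneg_left _ (by positivity)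
        have h1 : (g ^ n) * (g⁻¹ ^ n) = 1 := by
          rw [inv_pow, mul_inv_cancel]
        have := hD (g ^ n) (g⁻¹ ^ n)
        rwa [h1] at this
      · have := tendsto_inv_atTop_nhds_zero_nat.mul_const D
        simpa using this
    have hz1 : Tendsto (fun n : ℕ => (n : ℝ)⁻¹ • φ (1 : G)) atTop (nhds 0) := by
      have := (tendsto_inv_atTop_nhds_zero_nat (𝕜 := ℝ)).smul_const (φ (1 : G))
      simpa using this
    have h2 : Tendsto (fun n : ℕ => (n : ℝ)⁻¹ • φ (1 : G) - (n : ℝ)⁻¹ • φ (g ^ n)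
        - (n : ℝ)⁻¹ • (φ 1 - φ (g ^ n) - φ (g⁻¹ ^ n))) atTop (nhds (0 - φh g - 0)) :=
      (hz1.sub (hφh g)).sub hz
    have heq : (fun n : ℕ => (n : ℝ)⁻¹ • φ (1 : G) - (n : ℝ)⁻¹ • φ (g ^ n)
        - (n : ℝ)⁻¹ • (φ 1 - φ (g ^ n) - φ (g⁻¹ ^ n)))
        = fun n : ℕ => (n : ℝ)⁻¹ • φ (g⁻¹ ^ n) := by
      funext n
      rw [smul_sub, smul_sub]
      abel
    rw [heq] at h2
    have := tendsto_nhds_unique (hφh g⁻¹) h2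
    rw [this]; abel
  -- integer homogeneity
  have hint : ∀ g : G, ∀ k : ℤ, φh (g ^ k) = (k : ℝ) • φh g := by
    intro g k
    induction k using Int.rec with
    | ofNat m =>
      rcases Nat.eq_zero_or_pos m with h0 | hm
      · subst h0; simpa using hone
      · have := hnat g m hm
        simpa using this
    | negSucc m =>
      have h1 : g ^ (Int.negSucc m) = (g ^ (m + 1))⁻¹ := by
        rw [zpow_negSucc]
      rw [h1, hinv, hnat g (m + 1) (Nat.le_add_left 1 m), ← neg_smul]
      congr 1
      push_cast [Int.negSucc_eq]
      ring
  -- closeness of φh to φ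
  have hclose : ∀ g : G, ‖φh g - φ g‖ ≤ D := by
    intro g
    have ht : Tendsto (fun n : ℕ => ‖(n : ℝ)⁻¹ • φ (g ^ n) - φ g‖) atTop
        (nhds ‖φh g - φ g‖) := ((hφh g).sub_const (φ g)).norm
    apply le_of_tendsto ht
    filter_upwards [eventually_ge_atTop 1] with n hn
    have hn0 : (0 : ℝ) < n := by exact_mod_cast hn
    have hkey := key g n 1 hn
    rw [mul_one, pow_one] at hkey
    have heq : (n : ℝ)⁻¹ • φ (g ^ n) - φ g = (n : ℝ)⁻¹ • (φ (g ^ n) - (n : ℝ) • φ g) := by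
      rw [smul_sub, smul_smul, inv_mul_cancel₀ (ne_of_gt hn0), one_smul]
    rw [heq, norm_smul, Real.norm_eq_abs, abs_of_nonneg (by positivity)]
    calc (n : ℝ)⁻¹ * ‖φ (g ^ n) - (n : ℝ) • φ g‖ ≤ (n : ℝ)⁻¹ * (n * D) :=
          mul_le_mul_of_nonneg_left hkey (by positivity)
      _ = D := by field_simp
  refine ⟨φh, hφh, ?_, hint⟩
  intro g h
  have h1 := hclose (g * h)
  have h2 := hclose g
  have h3 := hclose h
  have h4 := hD g h
  have hex : φh (g * h) - φh g - φh h
      = ((φh (g * h) - φ (g * h)) - (φh g - φ g) - (φh h - φ h))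
        + (φ (g * h) - φ g - φ h) := by abel
  rw [hex]
  calc ‖((φh (g * h) - φ (g * h)) - (φh g - φ g) - (φh h - φ h)) + (φ (g * h) - φ g - φ h)‖
      ≤ ‖(φh (g * h) - φ (g * h)) - (φh g - φ g) - (φh h - φ h)‖ + ‖φ (g * h) - φ g - φ h‖ :=
        norm_add_le _ _
    _ ≤ (‖(φh (g * h) - φ (g * h)) - (φh g - φ g)‖ + ‖φh h - φ h‖) + ‖φ (g * h) - φ g - φ h‖ := by
        gcongr; exact norm_sub_le _ _
    _ ≤ ((‖φh (g * h) - φ (g * h)‖ + ‖φh g - φ g‖) + ‖φh h - φ h‖) + ‖φ (g * h) - φ g - φ h‖ := by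
        gcongr; exact norm_sub_le _ _
    _ ≤ 4 * D := by linarith
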